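/- For the binary matrix H described in the context (p an odd prime, 1 ≤ w ≤ p), let ⟨ℓ₁, ℓ₂⟩ denote the number of column positions (x,y), x,y ∈ {0,…,p²−1}, at which both rows ℓ₁ and ℓ₂ equal 1. Then ⟨ℓ₁, ℓ₂⟩ = p² if ℓ₁ = ℓ₂; ⟨ℓ₁, ℓ₂⟩ = 1 if ℓ₁ ≠ ℓ₂ and ⌊ℓ₁/p²⌋ ≠ ⌊ℓ₂/p²⌋ (the layers lie in different horizontal block-layers); and ⟨ℓ₁, ℓ₂⟩ = 0 if ℓ₁ ≠ ℓ₂ and ⌊ℓ₁/p²⌋ = ⌊ℓ₂/p²⌋ (the layers lie in the same horizontal block-layer). -/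
import Mathlib


open Matrix

/-- The layer-by-layer unfolding of the 2-D QC-LDPC parity-check tensor: a binary matrix
with rows indexed by layers `ℓ ∈ {0,…,w·p²−1}` and columns indexed by positions
`(x, y)` with `x, y ∈ {0,…,p²−1}`; entry `(ℓ, (x, y))` equals `1` iff
`x ≡ ℓ + ζ_{⌊ℓ/p²⌋}(⌊ℓ/p⌋) + ⌊ℓ/p²⌋·(φ(⌊x/p⌋) + ψ(⌊y/p⌋)) (mod p)` and
`y ≡ ℓ + ⌊ℓ/p²⌋·φ(⌊x/p⌋) (mod p)`. -/
def Hmat (p w : ℕ) (φ ψ : ZMod p → ZMod p) (ζ : ℕ → ZMod p → ZMod p) :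
    Matrix (Fin (w * p ^ 2)) (Fin (p ^ 2) × Fin (p ^ 2)) (ZMod 2) :=
  fun ℓ xy =>
    if (((xy.1 : ℕ) : ZMod p) =
          ((ℓ : ℕ) : ZMod p) + ζ ((ℓ : ℕ) / p ^ 2) (((ℓ : ℕ) / p : ℕ) : ZMod p) +
            (((ℓ : ℕ) / p ^ 2 : ℕ) : ZMod p) *
              (φ (((xy.1 : ℕ) / p : ℕ) : ZMod p) + ψ (((xy.2 : ℕ) / p : ℕ) : ZMod p)) ∧
        ((xy.2 : ℕ) : ZMod p) =
          ((ℓ : ℕ) : ZMod p) +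
            (((ℓ : ℕ) / p ^ 2 : ℕ) : ZMod p) * φ (((xy.1 : ℕ) / p : ℕ) : ZMod p))
    then 1 else 0

/-- Lemma 4 (inner product between any two horizontal layers): the number of column
positions where rows `ℓ₁` and `ℓ₂` both equal `1` is `p²` if `ℓ₁ = ℓ₂`, is `1` if the
two layers lie in different horizontal block-layers, and is `0` otherwise. -/

lemma aux_card_blocks (p : ℕ) [NeZero p] (hp : 0 < p)
    (Rx₁ Rx₂ : ZMod p → ZMod p → ZMod p) (Ry₁ Ry₂ : ZMod p → ZMod p) :
    (Finset.univ.filter (fun xy : Fin (p ^ 2) × Fin (p ^ 2) =>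
        (((xy.1 : ℕ) : ZMod p) = Rx₁ (((xy.1 : ℕ) / p : ℕ) : ZMod p) (((xy.2 : ℕ) / p : ℕ) : ZMod p) ∧
          ((xy.2 : ℕ) : ZMod p) = Ry₁ (((xy.1 : ℕ) / p : ℕ) : ZMod p)) ∧
        (((xy.1 : ℕ) : ZMod p) = Rx₂ (((xy.1 : ℕ) / p : ℕ) : ZMod p) (((xy.2 : ℕ) / p : ℕ) : ZMod p) ∧
          ((xy.2 : ℕ) : ZMod p) = Ry₂ (((xy.1 : ℕ) / p : ℕ) : ZMod p)))).card =
    (Finset.univ.filter (fun XY : ZMod p × ZMod p =>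
        Rx₁ XY.1 XY.2 = Rx₂ XY.1 XY.2 ∧ Ry₁ XY.1 = Ry₂ XY.1)).card := by

  have hlt : ∀ x : Fin (p ^ 2), (x : ℕ) / p < p := by
    intro x
    have := x.isLt
    rw [Nat.div_lt_iff_lt_mul hp]
    simpa [pow_two] using this
  have castinj : ∀ a b : ℕ, a < p → b < p → ((a : ZMod p) = (b : ZMod p)) → a = b := by
    intro a b ha hb h
    have := congrArg ZMod.val h
    rwa [ZMod.val_natCast_of_lt ha, ZMod.val_natCast_of_lt hb] at this
  have modeq : ∀ a b : ℕ, ((a : ZMod p) = (b : ZMod p)) → a % p = b % p := by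
    intro a b h
    exact (ZMod.natCast_eq_natCast_iff a b p).1 h
  apply Finset.card_bij
    (fun xy _ => (((((xy.1 : Fin (p^2)) : ℕ) / p : ℕ) : ZMod p),
                  ((((xy.2 : Fin (p^2)) : ℕ) / p : ℕ) : ZMod p)))
  · intro xy hxy
    simp only [Finset.mem_filter, Finset.mem_univ, true_and] at hxy ⊢
    obtain ⟨⟨h1, h2⟩, h3, h4⟩ := hxy
    exact ⟨h1 ▸ h3, h2 ▸ h4⟩
  · intro a ha b hb hab
    simp only [Finset.mem_filter, Finset.mem_univ, true_and] at ha hb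
    simp only [Prod.mk.injEq] at hab
    obtain ⟨hX, hY⟩ := hab
    have eX : (a.1 : ℕ) / p = (b.1 : ℕ) / p := castinj _ _ (hlt _) (hlt _) hX
    have eY : (a.2 : ℕ) / p = (b.2 : ℕ) / p := castinj _ _ (hlt _) (hlt _) hY
    have ex : (a.1 : ℕ) % p = (b.1 : ℕ) % p := by
      apply modeq
      rw [ha.1.1, hb.1.1, eX, eY]
    have ey : (a.2 : ℕ) % p = (b.2 : ℕ) % p := by
      apply modeq
      rw [ha.1.2, hb.1.2, eX]
    have : (a.1 : ℕ) = (b.1 : ℕ) := by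
      calc (a.1 : ℕ) = p * ((a.1 : ℕ) / p) + (a.1 : ℕ) % p := (Nat.div_add_mod _ _).symm
        _ = p * ((b.1 : ℕ) / p) + (b.1 : ℕ) % p := by rw [eX, ex]
        _ = (b.1 : ℕ) := Nat.div_add_mod _ _
    have h2 : (a.2 : ℕ) = (b.2 : ℕ) := by
      calc (a.2 : ℕ) = p * ((a.2 : ℕ) / p) + (a.2 : ℕ) % p := (Nat.div_add_mod _ _).symm
        _ = p * ((b.2 : ℕ) / p) + (b.2 : ℕ) % p := by rw [eY, ey]
        _ = (b.2 : ℕ) := Nat.div_add_mod _ _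
    exact Prod.ext (Fin.ext this) (Fin.ext h2)
  · intro XY hXY
    simp only [Finset.mem_filter, Finset.mem_univ, true_and] at hXY
    have hx : p * XY.1.val + (Rx₁ XY.1 XY.2).val < p ^ 2 := by
      have h1 : XY.1.val < p := ZMod.val_lt XY.1
      have h2 : (Rx₁ XY.1 XY.2).val < p := ZMod.val_lt _
      have : p * XY.1.val + (Rx₁ XY.1 XY.2).val < p * (XY.1.val + 1) := by rw [Nat.mul_succ]; omega
      calc p * XY.1.val + (Rx₁ XY.1 XY.2).val < p * (XY.1.val + 1) := this
        _ ≤ p * p := Nat.mul_le_mul_left p h1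
        _ = p ^ 2 := (pow_two p).symm
    have hy : p * XY.2.val + (Ry₁ XY.1).val < p ^ 2 := by
      have h1 : XY.2.val < p := ZMod.val_lt XY.2
      have h2 : (Ry₁ XY.1).val < p := ZMod.val_lt _
      have : p * XY.2.val + (Ry₁ XY.1).val < p * (XY.2.val + 1) := by rw [Nat.mul_succ]; omega
      calc p * XY.2.val + (Ry₁ XY.1).val < p * (XY.2.val + 1) := this
        _ ≤ p * p := Nat.mul_le_mul_left p h1
        _ = p ^ 2 := (pow_two p).symm
    refine ⟨(⟨p * XY.1.val + (Rx₁ XY.1 XY.2).val, hx⟩, ⟨p * XY.2.val + (Ry₁ XY.1).val, hy⟩), ?_, ?_⟩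
    · simp only [Finset.mem_filter, Finset.mem_univ, true_and]
      have dX : (p * XY.1.val + (Rx₁ XY.1 XY.2).val) / p = XY.1.val := by
        rw [Nat.mul_add_div hp, Nat.div_eq_of_lt (ZMod.val_lt _), add_zero]
      have dY : (p * XY.2.val + (Ry₁ XY.1).val) / p = XY.2.val := by
        rw [Nat.mul_add_div hp, Nat.div_eq_of_lt (ZMod.val_lt _), add_zero]
      have cX : (((p * XY.1.val + (Rx₁ XY.1 XY.2).val : ℕ)) : ZMod p) = Rx₁ XY.1 XY.2 := by
        push_cast
        simp [ZMod.natCast_self, ZMod.natCast_val, ZMod.cast_id]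
      have cY : (((p * XY.2.val + (Ry₁ XY.1).val : ℕ)) : ZMod p) = Ry₁ XY.1 := by
        push_cast
        simp [ZMod.natCast_self, ZMod.natCast_val, ZMod.cast_id]
      simp only [dX, dY, ZMod.natCast_val, ZMod.cast_id]
      refine ⟨⟨by simpa using cX, by simpa using cY⟩, ?_, ?_⟩
      · rw [← hXY.1]; simpa using cX
      · rw [← hXY.2]; simpa using cY
    · have dX : (p * XY.1.val + (Rx₁ XY.1 XY.2).val) / p = XY.1.val := by
        rw [Nat.mul_add_div hp, Nat.div_eq_of_lt (ZMod.val_lt _), add_zero]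
      have dY : (p * XY.2.val + (Ry₁ XY.1).val) / p = XY.2.val := by
        rw [Nat.mul_add_div hp, Nat.div_eq_of_lt (ZMod.val_lt _), add_zero]
      simp [dX, dY, ZMod.natCast_val, ZMod.cast_id]


theorem stmt_5 (p w : ℕ) (hp : p.Prime) (hodd : Odd p) (hw1 : 1 ≤ w) (hwp : w ≤ p)
    (φ ψ : ZMod p → ZMod p) (hφ : Function.Bijective φ) (hψ : Function.Bijective ψ)
    (ζ : ℕ → ZMod p → ZMod p) (hζ : ∀ m < w, Function.Bijective (ζ m))
    (ℓ₁ ℓ₂ : Fin (w * p ^ 2)) :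
    (Finset.univ.filter (fun xy : Fin (p ^ 2) × Fin (p ^ 2) =>
        Hmat p w φ ψ ζ ℓ₁ xy = 1 ∧ Hmat p w φ ψ ζ ℓ₂ xy = 1)).card =
      if ℓ₁ = ℓ₂ then p ^ 2
      else if (ℓ₁ : ℕ) / p ^ 2 ≠ (ℓ₂ : ℕ) / p ^ 2 then 1 else 0 := by
  haveI : Fact p.Prime := ⟨hp⟩
  have hp0 : 0 < p := hp.pos
  have hp2 : 0 < p ^ 2 := pow_pos hp0 2
  set m₁ : ℕ := (ℓ₁ : ℕ) / p ^ 2 with hm₁def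
  set m₂ : ℕ := (ℓ₂ : ℕ) / p ^ 2 with hm₂def
  have hm₁w : m₁ < w := by
    rw [hm₁def, Nat.div_lt_iff_lt_mul hp2]
    simpa [mul_comm] using ℓ₁.isLt
  have hm₂w : m₂ < w := by
    rw [hm₂def, Nat.div_lt_iff_lt_mul hp2]
    simpa [mul_comm] using ℓ₂.isLt
  have hmem : ∀ (ℓ : Fin (w * p ^ 2)) (xy : Fin (p ^ 2) × Fin (p ^ 2)),
      Hmat p w φ ψ ζ ℓ xy = 1 ↔
        (((xy.1 : ℕ) : ZMod p) =
            ((ℓ : ℕ) : ZMod p) + ζ ((ℓ : ℕ) / p ^ 2) (((ℓ : ℕ) / p : ℕ) : ZMod p) +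
              (((ℓ : ℕ) / p ^ 2 : ℕ) : ZMod p) *
                (φ (((xy.1 : ℕ) / p : ℕ) : ZMod p) + ψ (((xy.2 : ℕ) / p : ℕ) : ZMod p)) ∧
          ((xy.2 : ℕ) : ZMod p) =
            ((ℓ : ℕ) : ZMod p) +
              (((ℓ : ℕ) / p ^ 2 : ℕ) : ZMod p) * φ (((xy.1 : ℕ) / p : ℕ) : ZMod p)) := by
    intro ℓ xy
    simp only [Hmat]
    split_ifs with h <;> simp [h]
  have key : (Finset.univ.filter (fun xy : Fin (p ^ 2) × Fin (p ^ 2) =>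
        Hmat p w φ ψ ζ ℓ₁ xy = 1 ∧ Hmat p w φ ψ ζ ℓ₂ xy = 1)).card =
      (Finset.univ.filter (fun XY : ZMod p × ZMod p =>
        (((ℓ₁ : ℕ) : ZMod p) + ζ m₁ (((ℓ₁ : ℕ) / p : ℕ) : ZMod p) +
            (m₁ : ZMod p) * (φ XY.1 + ψ XY.2) =
          ((ℓ₂ : ℕ) : ZMod p) + ζ m₂ (((ℓ₂ : ℕ) / p : ℕ) : ZMod p) +
            (m₂ : ZMod p) * (φ XY.1 + ψ XY.2)) ∧
        ((ℓ₁ : ℕ) : ZMod p) + (m₁ : ZMod p) * φ XY.1 =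
          ((ℓ₂ : ℕ) : ZMod p) + (m₂ : ZMod p) * φ XY.1)).card := by
    rw [Finset.filter_congr (fun xy _ => by rw [hmem ℓ₁ xy, hmem ℓ₂ xy])]
    exact aux_card_blocks p hp0
      (fun X Y => ((ℓ₁ : ℕ) : ZMod p) + ζ m₁ (((ℓ₁ : ℕ) / p : ℕ) : ZMod p) +
        (m₁ : ZMod p) * (φ X + ψ Y))
      (fun X Y => ((ℓ₂ : ℕ) : ZMod p) + ζ m₂ (((ℓ₂ : ℕ) / p : ℕ) : ZMod p) +
        (m₂ : ZMod p) * (φ X + ψ Y))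
      (fun X => ((ℓ₁ : ℕ) : ZMod p) + (m₁ : ZMod p) * φ X)
      (fun X => ((ℓ₂ : ℕ) : ZMod p) + (m₂ : ZMod p) * φ X)
  rw [key]
  by_cases h12 : ℓ₁ = ℓ₂
  · subst h12
    rw [if_pos rfl]
    rw [Finset.filter_true_of_mem (fun XY _ => ⟨rfl, rfl⟩)]
    simp [Finset.card_univ, ZMod.card, sq]
  · rw [if_neg h12]
    by_cases hmm : m₁ = m₂
    · -- same block layer: empty
      rw [if_neg (by simpa [hm₁def, hm₂def] using not_not.mpr hmm)]
      rw [Finset.card_eq_zero, Finset.filter_eq_empty_iff]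
      rintro ⟨X, Y⟩ -
      rintro ⟨hx, hy⟩
      rw [hmm] at hx hy
      have hl : ((ℓ₁ : ℕ) : ZMod p) = ((ℓ₂ : ℕ) : ZMod p) := by
        have := add_right_cancel hy
        exact this
      have hzeta : ζ m₂ (((ℓ₁ : ℕ) / p : ℕ) : ZMod p) = ζ m₂ (((ℓ₂ : ℕ) / p : ℕ) : ZMod p) := by
        linear_combination hx - hl
      have hq : ((((ℓ₁ : ℕ) / p : ℕ)) : ZMod p) = ((((ℓ₂ : ℕ) / p : ℕ)) : ZMod p) :=
        (hζ m₂ hm₂w).1 hzeta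
      have e0 : (ℓ₁ : ℕ) % p = (ℓ₂ : ℕ) % p := (ZMod.natCast_eq_natCast_iff _ _ _).1 hl
      have e1 : ((ℓ₁ : ℕ) / p) % p = ((ℓ₂ : ℕ) / p) % p := (ZMod.natCast_eq_natCast_iff _ _ _).1 hq
      have e2 : (ℓ₁ : ℕ) / p / p = (ℓ₂ : ℕ) / p / p := by
        rw [Nat.div_div_eq_div_mul, Nat.div_div_eq_div_mul, ← pow_two]
        exact hmm
      have ediv : (ℓ₁ : ℕ) / p = (ℓ₂ : ℕ) / p := by
        calc (ℓ₁ : ℕ) / p = p * ((ℓ₁ : ℕ) / p / p) + ((ℓ₁ : ℕ) / p) % p :=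
              (Nat.div_add_mod _ _).symm
          _ = p * ((ℓ₂ : ℕ) / p / p) + ((ℓ₂ : ℕ) / p) % p := by rw [e1, e2]
          _ = (ℓ₂ : ℕ) / p := Nat.div_add_mod _ _
      apply h12
      apply Fin.ext
      calc (ℓ₁ : ℕ) = p * ((ℓ₁ : ℕ) / p) + (ℓ₁ : ℕ) % p := (Nat.div_add_mod _ _).symm
        _ = p * ((ℓ₂ : ℕ) / p) + (ℓ₂ : ℕ) % p := by rw [ediv, e0]
        _ = (ℓ₂ : ℕ) := Nat.div_add_mod _ _
    · -- different block layers: singleton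
      rw [if_pos (by simpa [hm₁def, hm₂def] using hmm)]
      set c : ZMod p := (m₁ : ZMod p) - (m₂ : ZMod p) with hcdef
      have hc : c ≠ 0 := by
        rw [hcdef, sub_ne_zero]
        intro hcast
        apply hmm
        exact ((ZMod.natCast_eq_natCast_iff _ _ _).1 hcast).eq_of_lt_of_lt
          (lt_of_lt_of_le hm₁w hwp) (lt_of_lt_of_le hm₂w hwp)
      set u : ZMod p := c⁻¹ * (((ℓ₂ : ℕ) : ZMod p) - ((ℓ₁ : ℕ) : ZMod p)) with hudef
      set d : ZMod p := (((ℓ₂ : ℕ) : ZMod p) + ζ m₂ (((ℓ₂ : ℕ) / p : ℕ) : ZMod p)) -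
        (((ℓ₁ : ℕ) : ZMod p) + ζ m₁ (((ℓ₁ : ℕ) / p : ℕ) : ZMod p)) with hddef
      set v : ZMod p := c⁻¹ * d - u with hvdef
      have hcu : c * u = ((ℓ₂ : ℕ) : ZMod p) - ((ℓ₁ : ℕ) : ZMod p) := by
        rw [hudef, ← mul_assoc, mul_inv_cancel₀ hc, one_mul]
      have hcv : c * v = d - (((ℓ₂ : ℕ) : ZMod p) - ((ℓ₁ : ℕ) : ZMod p)) := by
        rw [hvdef, mul_sub, ← mul_assoc, mul_inv_cancel₀ hc, one_mul, hcu]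
      set e : ZMod p ≃ ZMod p := Equiv.ofBijective φ hφ with hedef
      set f : ZMod p ≃ ZMod p := Equiv.ofBijective ψ hψ with hfdef
      have he : ∀ X, e X = φ X := fun X => rfl
      have hf : ∀ Y, f Y = ψ Y := fun Y => rfl
      rw [Finset.card_eq_one]
      refine ⟨(e.symm u, f.symm v), ?_⟩
      ext ⟨X, Y⟩
      simp only [Finset.mem_filter, Finset.mem_univ, true_and, Finset.mem_singleton,
        Prod.mk.injEq]
      constructor
      · rintro ⟨hx, hy⟩
        have hφX : φ X = u := by
          apply mul_left_cancel₀ hc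
          rw [hcu]
          linear_combination hy
        have hψY : ψ Y = v := by
          apply mul_left_cancel₀ hc
          rw [hcv]
          linear_combination hx - hy
        constructor
        · rw [Equiv.eq_symm_apply, he, hφX]
        · rw [Equiv.eq_symm_apply, hf, hψY]
      · rintro ⟨rfl, rfl⟩
        have hφa : φ (e.symm u) = u := e.apply_symm_apply u
        have hψb : ψ (f.symm v) = v := f.apply_symm_apply v
        rw [hφa, hψb]
        constructor
        · linear_combination hcu + hcv
        · linear_combination hcu
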